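/- Let U be a nonsingular 𝒰-matrix in standard 2×2 block form U = [[U_J, α 𝟏𝟏ᵗ], [b_K 𝟏ᵗ, U_K]] with α μ̄_J < 1, μ_J := U_J⁻¹𝟏 ≥ 0 and ν_J := (U_Jᵗ)⁻¹𝟏 ≥ 0 entrywise, α ≥ 0. Then for two distinct indices i, j both in the K-block with j ≠ n or both with i ≠ n, we have (U⁻¹)_{ij} < 0 if and only if (U_K⁻¹)_{ij} < 0. -/

import Mathlib

open Matrix BigOperators

theorem link_KK_block (m k : ℕ)
    (UJ : Matrix (Fin m) (Fin m) ℝ) (UK : Matrix (Fin (k + 1)) (Fin (k + 1)) ℝ)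
    (α : ℝ) (hJ : IsUnit UJ.det) (hK : IsUnit UK.det)
    (eK : Fin (k + 1) → ℝ) (heK : eK = Pi.single (Fin.last k) 1)
    (μJ : Fin m → ℝ) (hμJ : μJ = UJ⁻¹ *ᵥ (fun _ => 1))
    (νJ : Fin m → ℝ) (hνJ : νJ = (UJᵀ)⁻¹ *ᵥ (fun _ => 1))
    (hμJnonneg : ∀ i, 0 ≤ μJ i) (hνJnonneg : ∀ j, 0 ≤ νJ j) (hαnonneg : 0 ≤ α)
    (hα : α * (∑ i, μJ i) < 1)
    (hUnn : 0 < UK (Fin.last k) (Fin.last k))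
    (hνK : (UKᵀ)⁻¹ *ᵥ (fun _ => (1:ℝ))
      = (UK (Fin.last k) (Fin.last k))⁻¹ • (Pi.single (Fin.last k) 1 : Fin (k + 1) → ℝ))
    (U : Matrix (Fin m ⊕ Fin (k + 1)) (Fin m ⊕ Fin (k + 1)) ℝ)
    (hU : U = fromBlocks UJ (α • vecMulVec (fun _ => 1) (fun _ => 1))
      (vecMulVec (UK *ᵥ eK) (fun _ => 1)) UK) :
    ∀ (i j : Fin (k + 1)), i ≠ j → (i ≠ Fin.last k ∨ j ≠ Fin.last k) →
      (U⁻¹ (Sum.inr i) (Sum.inr j) < 0 ↔ UK⁻¹ i j < 0) := by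
  intro i j hij hij'
  set B : Matrix (Fin m) (Fin (k+1)) ℝ :=
    α • vecMulVec (fun _ => 1) (fun _ => 1) with hB
  set C : Matrix (Fin (k+1)) (Fin m) ℝ := vecMulVec (UK *ᵥ eK) (fun _ => 1) with hC
  letI iUK : Invertible UK := UK.invertibleOfIsUnitDet hK
  have hiUK : ⅟UK = UK⁻¹ := invOf_eq_nonsing_inv UK
  -- UK⁻¹ * C = vecMulVec eK 𝟏
  have h1 : UK⁻¹ *ᵥ (UK *ᵥ eK) = eK := by
    rw [mulVec_mulVec, nonsing_inv_mul UK hK, one_mulVec]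
  have hDC : UK⁻¹ * C = vecMulVec eK (fun _ => 1) := by
    ext a b
    simp only [hC, Matrix.mul_apply, vecMulVec_apply, mul_one]
    calc ∑ l, UK⁻¹ a l * (UK *ᵥ eK) l = (UK⁻¹ *ᵥ (UK *ᵥ eK)) a := rfl
    _ = eK a := by rw [h1]
  -- the Schur complement
  have hSchur : B * ⅟UK * C = α • vecMulVec (fun _ => (1:ℝ)) (fun _ => 1) := by
    rw [hiUK, Matrix.mul_assoc, hDC]
    ext a b
    simp only [hB, Matrix.smul_mul, Matrix.smul_apply, Matrix.mul_apply, vecMulVec_apply,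
      one_mul, mul_one, heK, smul_eq_mul]
    rw [← Finset.mul_sum, Finset.sum_pi_single']
    simp
  set S : Matrix (Fin m) (Fin m) ℝ := UJ - α • vecMulVec (fun _ => 1) (fun _ => 1) with hS
  have hUJμ : UJ *ᵥ μJ = fun _ => 1 := by
    rw [hμJ, mulVec_mulVec, mul_nonsing_inv UJ hJ, one_mulVec]
  have hUv : UJ * vecMulVec μJ (fun _ : Fin m => (1:ℝ))
      = vecMulVec (fun _ : Fin m => (1:ℝ)) (fun _ : Fin m => (1:ℝ)) := by
    ext a b
    simp only [Matrix.mul_apply, vecMulVec_apply, mul_one, one_mul]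
    calc ∑ l, UJ a l * μJ l = (UJ *ᵥ μJ) a := rfl
    _ = 1 := by rw [hUJμ]
  have hfact : S = UJ * (1 - α • vecMulVec μJ (fun _ => 1)) := by
    rw [Matrix.mul_sub, Matrix.mul_one, Matrix.mul_smul, hUv, hS]
  have hdet1 : (1 - α • vecMulVec μJ (fun _ : Fin m => (1:ℝ))).det = 1 - α * ∑ i, μJ i := by
    have e1 : (1 - α • vecMulVec μJ (fun _ : Fin m => (1:ℝ)))
        = 1 + replicateCol Unit (-(α • μJ)) * replicateRow Unit (fun _ : Fin m => (1:ℝ)) := by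
      rw [← vecMulVec_eq Unit]
      rw [sub_eq_add_neg]
      congr 1
      ext a b
      simp [vecMulVec_apply, mul_comm]
    rw [e1, det_one_add_replicateCol_mul_replicateRow]
    simp [dotProduct, Finset.mul_sum, mul_comm]
    ring
  have hdetS : IsUnit S.det := by
    rw [hfact, det_mul, hdet1]
    exact (hJ.mul (isUnit_iff_ne_zero.mpr (by linarith)))
  letI iS : Invertible S := S.invertibleOfIsUnitDet hdetS
  letI iS' : Invertible (UJ - B * ⅟UK * C) := by
    rw [hSchur]; exact iS
  letI iU : Invertible (fromBlocks UJ B C UK) := fromBlocks₂₂Invertible UJ B C UK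
  have hUinv : U⁻¹ = ⅟(fromBlocks UJ B C UK) := by
    rw [hU, ← invOf_eq_nonsing_inv]
  rw [hUinv, invOf_fromBlocks₂₂_eq]
  -- B * UK⁻¹ is a rank-one matrix supported on column `last k`
  have hBD : B * UK⁻¹ = (α * (UK (Fin.last k) (Fin.last k))⁻¹) •
      vecMulVec (fun _ => (1:ℝ)) (Pi.single (Fin.last k) 1) := by
    have hT : (UK⁻¹)ᵀ *ᵥ (fun _ => (1:ℝ))
        = (UK (Fin.last k) (Fin.last k))⁻¹ • (Pi.single (Fin.last k) 1 : Fin (k+1) → ℝ) := by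
      rw [transpose_nonsing_inv, hνK]
    ext a b
    simp only [hB, Matrix.smul_mul, Matrix.smul_apply, Matrix.mul_apply, vecMulVec_apply,
      one_mul, smul_eq_mul, Pi.smul_apply]
    have : ∑ x, α * 1 * UK⁻¹ x b = α * (((UK⁻¹)ᵀ *ᵥ (fun _ => (1:ℝ))) b) := by
      simp [mulVec, dotProduct, transpose_apply, Finset.mul_sum]
    rw [this, hT]
    simp [mul_assoc]
  set T : Matrix (Fin m) (Fin m) ℝ := ⅟(UJ - B * ⅟UK * C) with hT
  have hcorr : (⅟UK * C * T * B * ⅟UK) i j = 0 := by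
    have hexp : ⅟UK * C * T * B * ⅟UK
        = vecMulVec eK (fun _ : Fin m => (1:ℝ)) * T * ((α * (UK (Fin.last k) (Fin.last k))⁻¹) •
          vecMulVec (fun _ : Fin m => (1:ℝ)) (Pi.single (Fin.last k) 1)) := by
      rw [hiUK, Matrix.mul_assoc (UK⁻¹ * C * T), hBD, hDC]
    rw [hexp]
    rcases hij' with h | h
    · simp [Matrix.mul_apply, vecMulVec_apply, heK, Pi.single_eq_of_ne h, Finset.mul_sum]
    · simp [Matrix.mul_apply, vecMulVec_apply, Pi.single_eq_of_ne h, Finset.mul_sum]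
  have : (fromBlocks (⅟(UJ - B * ⅟UK * C)) (-(⅟(UJ - B * ⅟UK * C) * B * ⅟UK))
      (-(⅟UK * C * ⅟(UJ - B * ⅟UK * C)))
      (⅟UK + ⅟UK * C * ⅟(UJ - B * ⅟UK * C) * B * ⅟UK)) (Sum.inr i) (Sum.inr j)
      = UK⁻¹ i j := by
    rw [fromBlocks_apply₂₂, Matrix.add_apply, ← hT, hcorr, add_zero, hiUK]
  rw [this]
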